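/- If p/q is a rational number in lowest terms with |α − p/q| < 1/(2q²), then the points {⟨kα⟩ : k = 0, 1, …, q−1} are spaced so that any two consecutive points (in cyclic order on [0,1)) are within 3/(2q) of each other. In particular, each of the q disjoint intervals (i/q − 1/(2q), i/q + 1/(2q)) for i = 1,…,q−1 contains exactly one point of the set, namely ⟨ī α⟩ where ī p ≡ i (mod q) with 0 ≤ ī < q. -/

import Mathlib

/-- Spacing of the points `{⟨kα⟩ : 0 ≤ k < q}` when `|α - p/q| < 1/(2q²)` with `p/q` in
lowest terms: (a) any point of the set and its cyclic successor are within `3/(2q)` of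
each other (cyclic distance measured by `Int.fract (y - x)`), and (b) for each
`i = 1, …, q-1` the interval `(i/q - 1/(2q), i/q + 1/(2q))` contains exactly one point
of the set, namely `⟨ī α⟩` where `ī p ≡ i (mod q)`. -/
theorem stmt_13 (α : ℝ) (hirr : Irrational α) (p : ℤ) (q : ℕ) (hq : 0 < q)
    (hcop : Int.gcd p q = 1)
    (happ : |α - (p : ℝ) / q| < 1 / (2 * (q : ℝ) ^ 2))
    (S : Set ℝ) (hS : S = {y : ℝ | ∃ k : ℕ, k < q ∧ y = Int.fract (k * α)}) :
    (∀ x ∈ S, ∀ y ∈ S, x ≠ y →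
      (∀ z ∈ S, z ≠ x → Int.fract (y - x) ≤ Int.fract (z - x)) →
      Int.fract (y - x) ≤ 3 / (2 * q)) ∧
    (∀ i : ℕ, 1 ≤ i → i < q →
      (∃! k : ℕ, k < q ∧
        Int.fract (k * α) ∈ Set.Ioo ((i : ℝ) / q - 1 / (2 * q)) ((i : ℝ) / q + 1 / (2 * q))) ∧
      ∀ k : ℕ, k < q →
        Int.fract (k * α) ∈ Set.Ioo ((i : ℝ) / q - 1 / (2 * q)) ((i : ℝ) / q + 1 / (2 * q)) →
        ((k : ℤ) * p) % (q : ℤ) = (i : ℤ)) := by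
  have hq0 : (0:ℝ) < q := by exact_mod_cast hq
  have hqZ : (0:ℤ) < (q:ℤ) := by exact_mod_cast hq
  set ε : ℝ := α - (p:ℝ)/q with hεdef
  have hαeq : α = (p:ℝ)/q + ε := by rw [hεdef]; ring
  have hε : |ε| < 1/(2*(q:ℝ)^2) := happ
  -- Core lemma
  have key : ∀ n : ℤ, n.natAbs < q → 1 ≤ n * p % (q:ℤ) →
      Int.fract ((n:ℝ) * α) ∈
        Set.Ioo (((n * p % (q:ℤ) : ℤ):ℝ)/q - 1/(2*(q:ℝ))) (((n * p % (q:ℤ) : ℤ):ℝ)/q + 1/(2*(q:ℝ))) := by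
    intro n hn hr
    set r : ℤ := n * p % (q:ℤ) with hrdef
    set m : ℤ := n * p / (q:ℤ) with hmdef
    have hid : (q:ℤ) * m + r = n * p := Int.mul_ediv_add_emod _ _
    have hidR : (q:ℝ) * m + r = (n:ℝ) * p := by exact_mod_cast hid
    have hdecomp : (n:ℝ) * α = (m:ℝ) + ((r:ℝ)/q + (n:ℝ)*ε) := by
      rw [hαeq]; field_simp; nlinarith [hidR]
    have hrlt : r < q := Int.emod_lt_of_pos _ hqZ
    have hrR : (1:ℝ) ≤ r := by exact_mod_cast hr
    have hrR' : (r:ℝ) ≤ (q:ℝ) - 1 := by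
      have : r ≤ (q:ℤ) - 1 := by omega
      exact_mod_cast this
    have hna : |(n:ℝ)| ≤ (q:ℝ) - 1 := by
      have h1 : ((n.natAbs : ℤ) : ℝ) ≤ (q:ℝ) - 1 := by
        have : (n.natAbs : ℤ) ≤ (q:ℤ) - 1 := by omega
        exact_mod_cast this
      rwa [← Int.cast_abs, Int.abs_eq_natAbs]
    have hnε : |(n:ℝ)*ε| < 1/(2*(q:ℝ)) := by
      have h1 : |(n:ℝ)*ε| ≤ ((q:ℝ)-1) * (1/(2*(q:ℝ)^2)) := by
        rw [abs_mul]
        exact mul_le_mul hna hε.le (abs_nonneg _)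
          (by linarith [show (1:ℝ) ≤ q from by exact_mod_cast hq])
      have h2 : ((q:ℝ)-1) * (1/(2*(q:ℝ)^2)) < 1/(2*(q:ℝ)) := by
        have e : ((q:ℝ)-1) * (1/(2*(q:ℝ)^2)) = ((q:ℝ)-1)/(2*(q:ℝ)^2) := by ring
        rw [e, div_lt_div_iff₀ (by positivity) (by positivity)]
        nlinarith
      linarith
    obtain ⟨hl, hu⟩ := abs_lt.1 hnε
    have h1q : (1:ℝ)/q ≤ (r:ℝ)/q := div_le_div_of_nonneg_right hrR hq0.le
    have h2q : (r:ℝ)/q ≤ ((q:ℝ)-1)/q := div_le_div_of_nonneg_right hrR' hq0.le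
    have e1 : (1:ℝ)/q - 1/(2*(q:ℝ)) = 1/(2*(q:ℝ)) := by field_simp; ring
    have e2 : ((q:ℝ)-1)/q + 1/(2*(q:ℝ)) = 1 - 1/(2*(q:ℝ)) := by field_simp; ring
    have hpos : (0:ℝ) < 1/(2*(q:ℝ)) := by positivity
    have hfr : Int.fract ((r:ℝ)/q + (n:ℝ)*ε) = (r:ℝ)/q + (n:ℝ)*ε :=
      Int.fract_eq_self.2 ⟨by linarith, by linarith⟩
    rw [hdecomp, Int.fract_intCast_add, hfr]
    exact ⟨by linarith, by linarith⟩
  have hpos2q : (0:ℝ) < 1/(2*(q:ℝ)) := by positivity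
  have e2q : (1:ℝ)/(2*q) + 1/(2*q) = 1/q := by field_simp; norm_num
  have e12 : (1:ℝ)/q - 1/(2*(q:ℝ)) = 1/(2*(q:ℝ)) := by field_simp; ring
  -- inverse of p mod q
  obtain ⟨a, b, hab⟩ := Int.isCoprime_iff_gcd_eq_one.2 hcop
  have hap : a * p ≡ 1 [ZMOD (q:ℤ)] := Int.ModEq.symm (Int.modEq_iff_dvd.2 ⟨-b, by linarith⟩)
  -- residue lemma
  have res : ∀ k : ℕ, k < q → ∀ i : ℕ, 1 ≤ i → i < q →
      Int.fract ((k:ℝ) * α) ∈ Set.Ioo ((i : ℝ) / q - 1 / (2 * q)) ((i : ℝ) / q + 1 / (2 * q)) →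
      ((k : ℤ) * p) % (q : ℤ) = (i : ℤ) := by
    intro k hk i hi1 hiq hmem
    set r : ℤ := (k:ℤ) * p % (q:ℤ) with hrdef
    have hr0 : 0 ≤ r := Int.emod_nonneg _ (by omega)
    have hrlt : r < q := Int.emod_lt_of_pos _ hqZ
    have hiR : (1:ℝ) ≤ (i:ℝ) := by exact_mod_cast hi1
    obtain ⟨hC, hD⟩ := hmem
    by_cases hr1 : 1 ≤ r
    · have hmem' := key (k:ℤ) (by simpa using hk) hr1
      rw [Int.cast_natCast] at hmem'
      obtain ⟨hA, hB⟩ := hmem'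
      have hiR1 : (i:ℝ)/q < ((r:ℝ)+1)/q := by
        have h' : (i:ℝ)/q - 1/(2*q) < (r:ℝ)/q + 1/(2*q) := lt_trans hC hB
        have e : ((r:ℝ)+1)/q = (r:ℝ)/q + 1/q := by ring
        rw [e]; linarith
      have hiR2 : (r:ℝ)/q < ((i:ℝ)+1)/q := by
        have h' : (r:ℝ)/q - 1/(2*q) < (i:ℝ)/q + 1/(2*q) := lt_trans hA hD
        have e : ((i:ℝ)+1)/q = (i:ℝ)/q + 1/q := by ring
        rw [e]; linarith
      have h1 : (i:ℝ) < (r:ℝ) + 1 := (div_lt_div_iff_of_pos_right hq0).1 hiR1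
      have h2 : (r:ℝ) < (i:ℝ) + 1 := (div_lt_div_iff_of_pos_right hq0).1 hiR2
      have h1' : (i:ℤ) < r + 1 := by exact_mod_cast h1
      have h2' : r < (i:ℤ) + 1 := by exact_mod_cast h2
      omega
    · exfalso
      have hr0' : r = 0 := by omega
      have hdvd : (q:ℤ) ∣ (k:ℤ) * p := Int.dvd_of_emod_eq_zero hr0'
      have hdvdk : (q:ℤ) ∣ (k:ℤ) :=
        (Int.isCoprime_iff_gcd_eq_one.2 hcop).symm.dvd_of_dvd_mul_right hdvd
      have hk0 : k = 0 := Nat.eq_zero_of_dvd_of_lt (Int.natCast_dvd_natCast.1 hdvdk) hk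
      rw [hk0] at hC
      have h0 : Int.fract (((0:ℕ):ℝ) * α) = 0 := by norm_num
      rw [h0] at hC
      have : (1:ℝ)/q ≤ (i:ℝ)/q := div_le_div_of_nonneg_right hiR hq0.le
      linarith
  -- fract of difference of fracts
  have fsub : ∀ u v : ℝ, Int.fract (Int.fract u - Int.fract v) = Int.fract (u - v) := by
    intro u v
    have h : Int.fract u - Int.fract v = (u - v) + ((⌊v⌋ - ⌊u⌋ : ℤ) : ℝ) := by
      simp only [Int.fract]; push_cast; ring
    rw [h, Int.fract_add_intCast]
  constructor
  · -- part (a)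
    intro x hx y hy hxy hmin
    rw [hS] at hx hy
    obtain ⟨j, hj, hxj⟩ := hx
    obtain ⟨k', hk', hyk⟩ := hy
    rcases Nat.lt_or_ge q 2 with hq1 | hq2
    · -- q = 1 : impossible since S is a singleton
      exfalso
      have hq1' : q = 1 := by omega
      subst hq1'
      interval_cases j
      interval_cases k'
      exact hxy (hxj.trans hyk.symm)
    · -- q ≥ 2 : construct successor candidate
      have hqZ2 : (2:ℤ) ≤ (q:ℤ) := by exact_mod_cast hq2
      set t : ℤ := ((j:ℤ) + a) % (q:ℤ) with htdef
      have ht0 : 0 ≤ t := Int.emod_nonneg _ (by omega)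
      have htlt : t < q := Int.emod_lt_of_pos _ hqZ
      set k : ℕ := t.toNat with hkdef
      have hkt : (k:ℤ) = t := Int.toNat_of_nonneg ht0
      have hkq : k < q := by omega
      set n : ℤ := (k:ℤ) - (j:ℤ) with hndef
      have hnp : n * p % (q:ℤ) = 1 := by
        have h1 : n * p ≡ a * p [ZMOD (q:ℤ)] := by
          have ht : t ≡ (j:ℤ) + a [ZMOD (q:ℤ)] := Int.emod_emod_of_dvd _ dvd_rfl
          have : n ≡ a [ZMOD (q:ℤ)] := by
            calc n = t - (j:ℤ) := by rw [hndef, hkt]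
              _ ≡ ((j:ℤ) + a) - (j:ℤ) [ZMOD (q:ℤ)] := Int.ModEq.sub ht (Int.ModEq.refl _)
              _ = a := by ring
          exact this.mul_right p
        have h2 : n * p ≡ 1 [ZMOD (q:ℤ)] := h1.trans hap
        have := h2
        unfold Int.ModEq at this
        rw [this]
        exact Int.emod_eq_of_lt (by omega) (by omega)
      have hnabs : n.natAbs < q := by omega
      have hmem := key n hnabs (by rw [hnp])
      rw [hnp] at hmem
      obtain ⟨hA, hB⟩ := hmem
      have hApos : 0 < Int.fract ((n:ℝ) * α) := by
        have : (1:ℝ)/q - 1/(2*q) = 1/(2*q) := e12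
        push_cast at hA
        linarith
      have hBlt : Int.fract ((n:ℝ) * α) < 3/(2*(q:ℝ)) := by
        have e : (1:ℝ)/q + 1/(2*q) = 3/(2*q) := by field_simp; ring
        push_cast at hB
        linarith
      -- the candidate point z
      set z : ℝ := Int.fract ((k:ℝ) * α) with hzdef
      have hzS : z ∈ S := by rw [hS]; exact ⟨k, hkq, rfl⟩
      have hfz : Int.fract (z - x) = Int.fract ((n:ℝ) * α) := by
        rw [hzdef, hxj, fsub]
        congr 1
        push_cast [hndef]
        ring
      have hzx : z ≠ x := by
        intro h
        rw [h, sub_self, Int.fract_zero] at hfz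
        exact absurd hfz.symm (ne_of_gt hApos)
      have := hmin z hzS hzx
      rw [hfz] at this
      linarith
  · -- part (b)
    intro i hi1 hiq
    constructor
    · -- ∃! k
      set t : ℤ := ((i:ℤ) * a) % (q:ℤ) with htdef
      have ht0 : 0 ≤ t := Int.emod_nonneg _ (by omega)
      have htlt : t < q := Int.emod_lt_of_pos _ hqZ
      set k₀ : ℕ := t.toNat with hkdef
      have hkt : (k₀:ℤ) = t := Int.toNat_of_nonneg ht0
      have hk₀q : k₀ < q := by omega
      have hres : (k₀:ℤ) * p % (q:ℤ) = (i:ℤ) := by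
        have h1 : (k₀:ℤ) * p ≡ (i:ℤ) [ZMOD (q:ℤ)] := by
          calc (k₀:ℤ) * p = t * p := by rw [hkt]
            _ ≡ ((i:ℤ) * a) * p [ZMOD (q:ℤ)] := by
                have hmod : ((i:ℤ) * a) % (q:ℤ) ≡ (i:ℤ) * a [ZMOD (q:ℤ)] :=
                  Int.emod_emod_of_dvd _ dvd_rfl
                exact hmod.mul_right p
            _ = (i:ℤ) * (a * p) := by ring
            _ ≡ (i:ℤ) * 1 [ZMOD (q:ℤ)] := hap.mul_left _
            _ = (i:ℤ) := by ring
        have := h1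
        unfold Int.ModEq at this
        rw [this]
        exact Int.emod_eq_of_lt (by omega) (by exact_mod_cast hiq)
      have hmem := key (k₀:ℤ) (by simpa using hk₀q) (by rw [hres]; exact_mod_cast hi1)
      rw [hres, Int.cast_natCast] at hmem
      refine ⟨k₀, ⟨hk₀q, by push_cast at hmem ⊢; exact hmem⟩, ?_⟩
      intro k' ⟨hk'q, hk'mem⟩
      have h1 := res k' hk'q i hi1 hiq (by push_cast at hk'mem ⊢; exact hk'mem)
      have h2 : (k₀:ℤ) * p % (q:ℤ) = (i:ℤ) := hres
      -- k' ≡ k₀ mod q, both < q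
      have hd : (q:ℤ) ∣ ((k':ℤ) - (k₀:ℤ)) * p := by
        have hmm : (k':ℤ) * p ≡ (k₀:ℤ) * p [ZMOD (q:ℤ)] := by
          unfold Int.ModEq; rw [h1, h2]
        have hdd : (q:ℤ) ∣ (k':ℤ) * p - (k₀:ℤ) * p := Int.ModEq.dvd hmm.symm
        have e : (k':ℤ) * p - (k₀:ℤ) * p = ((k':ℤ) - (k₀:ℤ)) * p := by ring
        rwa [e] at hdd
      have hdk : (q:ℤ) ∣ ((k':ℤ) - (k₀:ℤ)) :=
        (Int.isCoprime_iff_gcd_eq_one.2 hcop).symm.dvd_of_dvd_mul_right hd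
      have habs : |(k':ℤ) - (k₀:ℤ)| < (q:ℤ) := by rw [abs_lt]; omega
      have := Int.eq_zero_of_abs_lt_dvd hdk habs
      omega
    · intro k hk hkmem
      exact res k hk i hi1 hiq (by push_cast at hkmem ⊢; exact hkmem)
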